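/- For any directed graph G representing a unicast index-coding instance, the number of vertices in a maximum acyclic induced subgraph of G is a lower bound on the optimal index codelength: mais(G) ≤ r_{m^t}(G) for all message alphabet sizes m^t. -/

import Mathlib

/-- `enc` is (the encoder of) a valid index code of length `p` for the side-information
graph `A`: every receiver `i` can decode its message `x i` from the codeword and the
messages `x j` of its out-neighbours `j` (those with `A i j`). -/
def IsIndexCode {V : Type} [Fintype V] {X Y : Type} (A : V → V → Prop)
    (p : ℕ) (enc : (V → X) → Fin p → Y) : Prop :=
  ∀ i : V, ∃ dec : (Fin p → Y) → ({j : V // A i j} → X) → X,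
    ∀ x : V → X, dec (enc x) (fun j => x j.1) = x i

/-- The optimal (normalised) index codelength `r_{|X|}(G)` for the side-information
graph `A` with message alphabet `X`: the infimum over all index codes of
`p · log |Y| / log |X|`. -/
noncomputable def optLen (V : Type) [Fintype V] (A : V → V → Prop)
    (X : Type) [Fintype X] : ℝ :=
  sInf {ℓ : ℝ | ∃ (Y : Type) (inst : Fintype Y) (p : ℕ)
    (enc : (V → X) → Fin p → Y), 2 ≤ @Fintype.card Y inst ∧
    IsIndexCode A p enc ∧
    ℓ = (p * Real.log (@Fintype.card Y inst)) / Real.log (Fintype.card X)}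
/-- There is a directed cycle of `A` all of whose vertices lie in `S`. -/
def HasCycleIn {V : Type} (A : V → V → Prop) (S : Set V) : Prop :=
  ∃ (v : V) (l : List V), (v :: l).Nodup ∧ (∀ x ∈ v :: l, x ∈ S) ∧
    List.Chain A v (l ++ [v])

/-- The number of vertices of a maximum acyclic induced subgraph of `A`. -/
noncomputable def mais (V : Type) [Fintype V] (A : V → V → Prop) : ℕ :=
  sSup {k : ℕ | ∃ S : Finset V, ¬ HasCycleIn A ↑S ∧ k = S.card}

section Aux

variable {V : Type} [Fintype V]

/-- Chains along a sequence `g` with consecutive `A`-steps. -/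
private lemma chain_of_seq (A : V → V → Prop) (g : ℕ → V) (hg : ∀ k, A (g k) (g (k + 1))) :
    ∀ n s, List.Chain A (g s) ((List.range n).map (fun k => g (s + k + 1))) := by
  intro n
  induction n with
  | zero => intro s; simp; exact List.Chain.nil
  | succ n ih =>
    intro s
    rw [List.range_succ_eq_map]
    simp only [List.map_cons, List.map_map]
    refine List.Chain.cons (by simpa using hg s) ?_
    have hfun : ((fun k => g (s + k + 1)) ∘ Nat.succ) = fun k => g ((s + 1) + k + 1) := by
      funext k; simp only [Function.comp]; congr 1; omega
    rw [hfun]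
    simpa using ih (s + 1)

/-- If the subgraph induced on `S` has no directed cycle, then the "out-neighbour in `S`"
relation is well-founded. -/
private lemma wf_of_no_cycle (A : V → V → Prop) (S : Finset V)
    (h : ¬ HasCycleIn A ↑S) :
    WellFounded (fun x y : V => A y x ∧ x ∈ S ∧ y ∈ S) := by
  classical
  set r : V → V → Prop := fun x y : V => A y x ∧ x ∈ S ∧ y ∈ S with hr
  by_contra hwf
  have hna : ∀ a : V, ¬ Acc r a → ∃ b, r b a ∧ ¬ Acc r b := by
    intro a ha
    by_contra hc
    push_neg at hc
    exact ha (Acc.intro a hc)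
  obtain ⟨x0, hx0⟩ : ∃ x, ¬ Acc r x := by
    by_contra hc
    push_neg at hc
    exact hwf ⟨hc⟩
  let F : ℕ → {a : V // ¬ Acc r a} := fun n =>
    Nat.rec ⟨x0, hx0⟩
      (fun _ q => ⟨(hna q.1 q.2).choose, (hna q.1 q.2).choose_spec.2⟩) n
  have hFstep : ∀ n : ℕ, r ((F (n + 1)).1) ((F n).1) := fun n =>
    (hna (F n).1 (F n).2).choose_spec.1
  set f : ℕ → V := fun n => (F n).1 with hfdef
  have hstep : ∀ n : ℕ, A (f n) (f (n + 1)) ∧ f (n + 1) ∈ S ∧ f n ∈ S := fun n => hFstep n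
  obtain ⟨a, b, hne, hab⟩ := Finite.exists_ne_map_eq_of_infinite f
  have hex : ∃ d, 0 < d ∧ ∃ a, f a = f (a + d) := by
    rcases Nat.lt_or_ge a b with h' | h'
    · refine ⟨b - a, by omega, a, ?_⟩
      have : a + (b - a) = b := by omega
      rw [this]; exact hab
    · have h'' : b < a := by omega
      refine ⟨a - b, by omega, b, ?_⟩
      have : b + (a - b) = a := by omega
      rw [this]; exact hab.symm
  set d := Nat.find hex with hd
  obtain ⟨hd0, a₀, hfa⟩ := Nat.find_spec hex
  have hmin : ∀ d', 0 < d' → d' < d → ∀ a', f a' ≠ f (a' + d') := by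
    intro d' h1 h2 a' hc
    exact Nat.find_min hex h2 ⟨h1, a', hc⟩
  set g : ℕ → V := fun k => f (a₀ + k) with hgdef
  have hg : ∀ k, A (g k) (g (k + 1)) := by
    intro k
    have := (hstep (a₀ + k)).1
    simpa [hgdef, Nat.add_assoc] using this
  have hgS : ∀ k, g k ∈ S := fun k => (hstep (a₀ + k)).2.2
  have hgd : g d = g 0 := by
    simp only [hgdef, Nat.add_zero]
    exact hfa.symm
  have hginj : ∀ i j, i < d → j < d → g i = g j → i = j := by
    intro i j hi hj hij
    by_contra hne'
    rcases Nat.lt_or_ge i j with h' | h'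
    · refine hmin (j - i) (by omega) (by omega) (a₀ + i) ?_
      have : a₀ + i + (j - i) = a₀ + j := by omega
      rw [this]; exact hij
    · have h'' : j < i := by omega
      refine hmin (i - j) (by omega) (by omega) (a₀ + j) ?_
      have : a₀ + j + (i - j) = a₀ + i := by omega
      rw [this]; exact hij.symm
  apply h
  refine ⟨g 0, (List.range (d - 1)).map (fun k => g (k + 1)), ?_, ?_, ?_⟩
  · rw [List.nodup_cons]
    constructor
    · intro hmem
      obtain ⟨k, hk, hgk⟩ := List.mem_map.1 hmem
      rw [List.mem_range] at hk
      have := hginj (k + 1) 0 (by omega) (by omega) hgk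
      omega
    · refine List.Nodup.map_on ?_ List.nodup_range
      intro i hi j hj hij
      rw [List.mem_range] at hi hj
      have := hginj (i + 1) (j + 1) (by omega) (by omega) hij
      omega
  · intro x hx
    rcases List.mem_cons.1 hx with rfl | hx
    · simpa using hgS 0
    · obtain ⟨k, _, rfl⟩ := List.mem_map.1 hx
      simpa using hgS (k + 1)
  · have hlist : (List.range (d - 1)).map (fun k => g (k + 1)) ++ [g 0]
        = (List.range d).map (fun k => g (k + 1)) := by
      have hd' : d = (d - 1) + 1 := by omega
      rw [hd', List.range_succ, List.map_append]
      simp only [List.map_cons, List.map_nil]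
      congr 2
      rw [← hd', hgd]
    rw [hlist]
    have := chain_of_seq A g hg d 0
    simpa using this

/-- Any valid index code restricted to messages supported on an acyclic set is injective,
hence the cardinality bound. -/
private lemma card_pow_le {X Y : Type} [Fintype X] [Fintype Y] [Nonempty X]
    (A : V → V → Prop) (p : ℕ) (enc : (V → X) → Fin p → Y) (hcode : IsIndexCode A p enc)
    (S : Finset V) (hS : ¬ HasCycleIn A ↑S) :
    Fintype.card X ^ S.card ≤ Fintype.card Y ^ p := by
  classical
  have wf := wf_of_no_cycle A S hS
  set ext : ({x // x ∈ S} → X) → V → X :=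
    fun g v => if h : v ∈ S then g ⟨v, h⟩ else Classical.arbitrary X with hext
  have hinj : Function.Injective (fun g => enc (ext g)) := by
    intro g g' hgg'
    simp only at hgg'
    have key : ∀ v, ext g v = ext g' v := by
      intro v
      induction v using WellFounded.induction wf with
      | _ v ih =>
        by_cases hv : v ∈ S
        · obtain ⟨dec, hdec⟩ := hcode v
          have h1 := hdec (ext g)
          have h2 := hdec (ext g')
          have hnb : (fun j : {j // A v j} => ext g j.1) = fun j => ext g' j.1 := by
            funext j
            by_cases hj : j.1 ∈ S
            · exact ih j.1 ⟨j.2, hj, hv⟩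
            · simp [hext, hj]
          rw [← h1, ← h2, hgg', hnb]
        · simp [hext, hv]
    funext s
    have := key s.1
    simpa [hext, s.2] using this
  have hcard := Fintype.card_le_of_injective _ hinj
  calc Fintype.card X ^ S.card = Fintype.card ({x // x ∈ S} → X) := by
        rw [Fintype.card_fun, Fintype.card_coe]
    _ ≤ Fintype.card (Fin p → Y) := hcard
    _ = Fintype.card Y ^ p := by rw [Fintype.card_fun, Fintype.card_fin]

end Aux

/-- The MAIS lower bound: for any message alphabet of size `m^t`, the optimal index
codelength is at least `mais(G)`. -/
theorem mais_le_optLen {V : Type} [Fintype V] (A : V → V → Prop)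
    (X : Type) [Fintype X] (m t : ℕ) (hm : 2 ≤ m) (ht : 1 ≤ t)
    (hX : Fintype.card X = m ^ t) :
    (mais V A : ℝ) ≤ optLen V A X := by
  classical
  have hX2 : 2 ≤ Fintype.card X := by
    rw [hX]
    calc 2 ≤ m := hm
      _ = m ^ 1 := (pow_one m).symm
      _ ≤ m ^ t := Nat.pow_le_pow_right (by omega) ht
  have hXpos : (0 : ℕ) < Fintype.card X := by omega
  have : Nonempty X := Fintype.card_pos_iff.mp hXpos
  have hlogX : 0 < Real.log (Fintype.card X) :=
    Real.log_pos (by exact_mod_cast hX2)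
  -- `mais` is attained by some acyclic set `S`.
  have h0 : (0 : ℕ) ∈ {k : ℕ | ∃ S : Finset V, ¬ HasCycleIn A ↑S ∧ k = S.card} := by
    refine ⟨∅, ?_, by simp⟩
    rintro ⟨v, l, _, hmem, _⟩
    simpa using hmem v List.mem_cons_self
  have hbdd : BddAbove {k : ℕ | ∃ S : Finset V, ¬ HasCycleIn A ↑S ∧ k = S.card} := by
    refine ⟨Fintype.card V, ?_⟩
    rintro k ⟨S, _, rfl⟩
    simpa using S.card_le_univ
  obtain ⟨S, hS, hScard⟩ : ∃ S : Finset V, ¬ HasCycleIn A ↑S ∧ mais V A = S.card :=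
    Nat.sSup_mem ⟨0, h0⟩ hbdd
  -- Apply `le_csInf`.
  refine le_csInf ?_ ?_
  · -- the set of achievable lengths is nonempty: the trivial code
    refine ⟨(Fintype.card V : ℝ) * Real.log (Fintype.card X) / Real.log (Fintype.card X),
      X, inferInstance, Fintype.card V,
      fun x k => x ((Fintype.equivFin V).symm k), hX2, ?_, rfl⟩
    intro i
    refine ⟨fun c _ => c (Fintype.equivFin V i), fun x => ?_⟩
    simp
  · rintro ℓ ⟨Y, instY, p, enc, hY2, hcode, rfl⟩
    have hcard := @card_pow_le V _ X Y _ instY _ A p enc hcode S hS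
    rw [hScard]
    rw [le_div_iff₀ hlogX]
    have hcastle : ((Fintype.card X : ℝ)) ^ S.card ≤ ((@Fintype.card Y instY : ℝ)) ^ p := by
      exact_mod_cast hcard
    have hYpos : (0 : ℝ) < (@Fintype.card Y instY : ℝ) := by
      have : (0 : ℕ) < @Fintype.card Y instY := by omega
      exact_mod_cast this
    calc (S.card : ℝ) * Real.log (Fintype.card X)
        = Real.log ((Fintype.card X : ℝ) ^ S.card) := (Real.log_pow _ _).symm
      _ ≤ Real.log ((@Fintype.card Y instY : ℝ) ^ p) := by
          rw [Real.log_le_log_iff (by positivity) (by positivity)]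
          exact hcastle
      _ = p * Real.log (@Fintype.card Y instY) := Real.log_pow _ _
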